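/- In the inverse limit of iterated barycentric subdivisions of the standard 1-simplex [0,1] (with bonding maps as above), let x ∈ (0,1). If x is a dyadic rational k/2ᴺ (0 < k < 2ᴺ), then the down-set of the maximal point corresponding to x in the specialization order has exactly 3 elements; if x is not a dyadic rational, the down-set is a singleton. -/

import Mathlib

/-- Faces of the `n`-th dyadic (barycentric) subdivision of `[0,1]`:
`inl e` is the edge `[e/2ⁿ, (e+1)/2ⁿ]`, `inr v` is the vertex `v/2ⁿ`. -/
def Face (n : ℕ) : Type := Fin (2 ^ n) ⊕ Fin (2 ^ n + 1)

/-- The geometric realization of a face of the `n`-th dyadic subdivision of `[0,1]`. -/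
noncomputable def realF (n : ℕ) : Face n → Set ℝ
  | .inl e => Set.Icc ((e.1 : ℝ) / 2 ^ n) ((e.1 + 1 : ℝ) / 2 ^ n)
  | .inr v => {(v.1 : ℝ) / 2 ^ n}

/-- The inverse limit `Ch^∞(I)` of the iterated barycentric subdivisions of the standard
1-simplex. -/
def CLim : Type :=
  {σ : (n : ℕ) → Face n //
    ∀ n, realF (n + 1) (σ (n + 1)) ⊆ realF n (σ n) ∧
      ∀ f : Face n, realF (n + 1) (σ (n + 1)) ⊆ realF n f → realF n (σ n) ⊆ realF n f}

/-- The specialization order on `Ch^∞(I)`: `σ ⪯ τ` iff `σₙ ≥ τₙ` for all `n`. -/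
def SpecLe (σ τ : CLim) : Prop := ∀ n, realF n (τ.1 n) ⊆ realF n (σ.1 n)

lemma keyle {m n a b : ℕ} : (a:ℝ)/2^m ≤ (b:ℝ)/2^n ↔ a * 2^n ≤ b * 2^m := by
  rw [div_le_div_iff₀ (by positivity) (by positivity)]; norm_cast

lemma keyeq {m n a b : ℕ} : (a:ℝ)/2^m = (b:ℝ)/2^n ↔ a * 2^n = b * 2^m := by
  rw [div_eq_div_iff (by positivity) (by positivity)]; norm_cast

lemma edge_nonempty {n e : ℕ} : (e:ℝ)/2^n ≤ ((e:ℝ)+1)/2^n := by gcongr; linarith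

lemma icc_sub_iff {m n a b : ℕ} :
    Set.Icc ((a:ℝ)/2^m) (((a:ℝ)+1)/2^m) ⊆ Set.Icc ((b:ℝ)/2^n) (((b:ℝ)+1)/2^n)
    ↔ (b*2^m ≤ a*2^n ∧ (a+1)*2^n ≤ (b+1)*2^m) := by
  rw [Set.Icc_subset_Icc_iff edge_nonempty]
  have e1 : ((a:ℝ)+1) = ((a+1:ℕ):ℝ) := by push_cast; ring
  have e2 : ((b:ℝ)+1) = ((b+1:ℕ):ℝ) := by push_cast; ring
  rw [e1, e2, keyle, keyle]

lemma mem_icc_iff {n a c M : ℕ} :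
    (c:ℝ)/2^M ∈ Set.Icc ((a:ℝ)/2^n) (((a:ℝ)+1)/2^n) ↔ a*2^M ≤ c*2^n ∧ c*2^n ≤ (a+1)*2^M := by
  rw [Set.mem_Icc]
  have e1 : ((a:ℝ)+1) = ((a+1:ℕ):ℝ) := by push_cast; ring
  rw [e1, keyle, keyle]

lemma edge_not_sub_sing {n e : ℕ} {p : ℝ} (h : Set.Icc ((e:ℝ)/2^n) (((e:ℝ)+1)/2^n) ⊆ {p}) : False := by
  have h1 := h (Set.left_mem_Icc.2 edge_nonempty)
  have h2 := h (Set.right_mem_Icc.2 edge_nonempty)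
  simp only [Set.mem_singleton_iff] at h1 h2
  have h3 := h1.trans h2.symm
  have hp : (0:ℝ) < 2^n := by positivity
  rw [div_eq_div_iff hp.ne' hp.ne'] at h3
  nlinarith

lemma edge_sub_edge {n : ℕ} {e e' : ℕ}
    (h : Set.Icc ((e:ℝ)/2^n) (((e:ℝ)+1)/2^n) ⊆ Set.Icc ((e':ℝ)/2^n) (((e':ℝ)+1)/2^n)) :
    e = e' := by
  have h2 := icc_sub_iff.1 h
  have hp : 0 < 2^n := Nat.pow_pos (by norm_num)
  have c1 : e' ≤ e := Nat.le_of_mul_le_mul_right h2.1 hp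
  have c2 : e + 1 ≤ e' + 1 := Nat.le_of_mul_le_mul_right h2.2 hp
  omega

lemma face_of_sub {n a : ℕ} (f : Face n)
    (h : Set.Icc ((a:ℝ)/2^(n+1)) (((a:ℝ)+1)/2^(n+1)) ⊆ realF n f) :
    ∃ e : Fin (2^n), f = Sum.inl e ∧ e.1 = a/2 := by
  cases f with
  | inr v => exact absurd h (by simp only [realF]; exact fun hh => edge_not_sub_sing hh)
  | inl e =>
    refine ⟨e, rfl, ?_⟩
    simp only [realF] at h
    have h2 := icc_sub_iff.1 h
    have hp : 0 < 2^n := Nat.pow_pos (by norm_num)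
    have c1 : 2*e.1 ≤ a := by
      have h3 : (2*e.1) * 2^n ≤ a * 2^n := by
        have := h2.1; rw [pow_succ] at this; nlinarith
      exact Nat.le_of_mul_le_mul_right h3 hp
    have c2 : a + 1 ≤ 2*e.1 + 2 := by
      have h3 : (a+1) * 2^n ≤ (2*e.1+2) * 2^n := by
        have := h2.2; rw [pow_succ] at this; nlinarith
      exact Nat.le_of_mul_le_mul_right h3 hp
    omega

lemma sub_of_half {n a : ℕ} :
    Set.Icc ((a:ℝ)/2^(n+1)) (((a:ℝ)+1)/2^(n+1))
      ⊆ Set.Icc (((a/2 : ℕ):ℝ)/2^n) ((((a/2:ℕ):ℝ)+1)/2^n) := by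
  rw [icc_sub_iff, pow_succ]
  have h1 : 2*(a/2) ≤ a := by omega
  have h2 : a + 1 ≤ 2*(a/2) + 2 := by omega
  have hp : 0 < 2^n := Nat.pow_pos (by norm_num)
  constructor
  · nlinarith
  · nlinarith


lemma ndiv1 {M m : ℕ} (hM : 0 < M) (hm : 1 ≤ m) : (2*m - 1)/(2*M) = (m-1)/M := by
  have h := Nat.div_add_mod (m-1) M
  have hr := Nat.mod_lt (m-1) hM
  set q := (m-1)/M with hq
  set r := (m-1)%M with hrdef
  have h2 : 2*m - 1 = (2*r+1) + (2*M)*q := by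
    have : (2*M)*q = 2*(M*q) := by ring
    omega
  rw [h2, Nat.add_mul_div_left _ _ (by omega), Nat.div_eq_of_lt (by omega), Nat.zero_add]

lemma ndiv2 {M q : ℕ} (hM : 0 < M) (hq : 1 ≤ q) : (q*M - 1)/M = q - 1 := by
  have h2 : q*M - 1 = (M-1) + M*(q-1) := by
    have h3 : M*(q-1) + M = M * q := by
      have h5 : M * (q-1) = M*q - M := Nat.mul_pred ..
      have h6 : M ≤ M * q := Nat.le_mul_of_pos_right M hq
      omega
    have h4 : q * M = M * q := Nat.mul_comm q M
    omega
  rw [h2, Nat.add_mul_div_left _ _ hM, Nat.div_eq_of_lt (by omega), Nat.zero_add]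

lemma ndiv3 {M m : ℕ} (hM : 0 < M) (hm : 0 < m) (h : ¬ M ∣ m) : (m-1)/M = m/M := by
  have hd := Nat.div_add_mod m M
  have hr := Nat.mod_lt m hM
  have hr0 : m % M ≠ 0 := fun hh => h (Nat.dvd_of_mod_eq_zero hh)
  set q := m/M with hq
  set r := m%M with hrdef
  have h2 : m - 1 = (r-1) + M*q := by omega
  rw [h2, Nat.add_mul_div_left _ _ hM, Nat.div_eq_of_lt (by omega), Nat.zero_add]

def dA (N k n : ℕ) : ℕ := k * 2^n / 2^N
def dB (N k n : ℕ) : ℕ := (k * 2^n - 1) / 2^N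

lemma two_pow_pos' (n : ℕ) : 0 < 2^n := Nat.pow_pos (by norm_num)

lemma dA_lt {N k : ℕ} (hkN : k < 2^N) (n : ℕ) : dA N k n < 2^n := by
  rw [dA, Nat.div_lt_iff_lt_mul (two_pow_pos' N)]
  calc k * 2^n < 2^N * 2^n := by
        exact (Nat.mul_lt_mul_right (two_pow_pos' n)).2 hkN
    _ = 2^n * 2^N := Nat.mul_comm _ _

lemma dB_le_dA (N k n : ℕ) : dB N k n ≤ dA N k n :=
  Nat.div_le_div_right (Nat.sub_le _ _)

lemma dB_lt {N k : ℕ} (hkN : k < 2^N) (n : ℕ) : dB N k n < 2^n :=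
  lt_of_le_of_lt (dB_le_dA N k n) (dA_lt hkN n)

lemma dA_rec (N k n : ℕ) : dA N k (n+1) / 2 = dA N k n := by
  rw [dA, dA, Nat.div_div_eq_div_mul, pow_succ]
  rw [show k * (2^n * 2) = (k * 2^n) * 2 from by ring]
  exact Nat.mul_div_mul_right _ _ (by norm_num)

lemma dB_rec {k : ℕ} (hk : 0 < k) (N n : ℕ) : dB N k (n+1) / 2 = dB N k n := by
  rw [dB, dB, Nat.div_div_eq_div_mul, pow_succ]
  rw [show k * (2^n * 2) = 2 * (k * 2^n) from by ring,
      show 2^N * 2 = 2 * 2^N from Nat.mul_comm _ _]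
  exact ndiv1 (two_pow_pos' N) (Nat.one_le_iff_ne_zero.2 (by positivity))

lemma dA_dvd {N k n : ℕ} (hn : N ≤ n) : dA N k n * 2^N = k * 2^n := by
  apply Nat.div_mul_cancel
  exact Dvd.dvd.mul_left (pow_dvd_pow 2 hn) k

lemma dA_pos {N k n : ℕ} (hk : 0 < k) (hn : N ≤ n) : 1 ≤ dA N k n := by
  rw [dA, Nat.le_div_iff_mul_le (two_pow_pos' N), Nat.one_mul]
  calc 2^N ≤ 2^n := Nat.pow_le_pow_right (by norm_num) hn
    _ ≤ k * 2^n := Nat.le_mul_of_pos_left _ hk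

lemma dB_succ {N k n : ℕ} (hk : 0 < k) (hn : N ≤ n) : dB N k n + 1 = dA N k n := by
  have h1 : dB N k n = dA N k n - 1 := by
    rw [dB, ← dA_dvd (k := k) hn, ndiv2 (two_pow_pos' N) (dA_pos hk hn)]
  have := dA_pos hk hn
  omega

lemma not_dvd_pow {N k n : ℕ} (hk : k % 2 = 1) (hn : n < N) : ¬ (2^N ∣ k * 2^n) := by
  rintro ⟨c, hc⟩
  have h1 : 2^N = 2^n * 2^(N-n) := by
    rw [← pow_add]; congr 1; omega
  have h2 : 2^(N-n) = 2 * 2^(N-n-1) := by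
    rw [← pow_succ']; congr 1; omega
  rw [h1, h2] at hc
  have h3 : 2^n * k = 2^n * (2 * (2^(N-n-1) * c)) := by
    calc 2^n * k = k * 2^n := Nat.mul_comm _ _
      _ = 2^n * (2 * 2^(N-n-1)) * c := hc
      _ = 2^n * (2 * (2^(N-n-1) * c)) := by ring
  have h4 : k = 2 * (2^(N-n-1) * c) := Nat.eq_of_mul_eq_mul_left (two_pow_pos' n) h3
  omega

lemma dBlow {N k n : ℕ} (hk : k % 2 = 1) (hn : n < N) : dB N k n = dA N k n := by
  rw [dB, dA]
  exact ndiv3 (two_pow_pos' N) (Nat.mul_pos (by omega) (two_pow_pos' n)) (not_dvd_pow hk hn)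

lemma dA2 {N k n : ℕ} (hn : N ≤ n) : dA N k (n+1) = 2 * dA N k n := by
  apply Nat.eq_of_mul_eq_mul_right (two_pow_pos' N)
  rw [dA_dvd (Nat.le_succ_of_le hn), show 2 * dA N k n * 2^N = 2 * (dA N k n * 2^N) from by ring,
      dA_dvd hn, pow_succ]
  ring

lemma edge_seq_spec (a : ℕ → ℕ) (hb : ∀ n, a n < 2^n) (hrec : ∀ n, a (n+1)/2 = a n) (n : ℕ) :
    realF (n+1) (Sum.inl ⟨a (n+1), hb (n+1)⟩) ⊆ realF n (Sum.inl ⟨a n, hb n⟩) ∧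
    ∀ f : Face n, realF (n+1) (Sum.inl ⟨a (n+1), hb (n+1)⟩) ⊆ realF n f →
      realF n (Sum.inl ⟨a n, hb n⟩) ⊆ realF n f := by
  constructor
  · have h := sub_of_half (n := n) (a := a (n+1))
    rw [hrec] at h
    simpa [realF] using h
  · intro f hf
    obtain ⟨e, rfl, he⟩ := face_of_sub f (by simpa [realF] using hf)
    have he' : e.1 = a n := by rw [he, hrec]
    simp [realF, he']

lemma downset_dyadic (N k : ℕ) (hN : 0 < N) (hk0 : 0 < k) (hkodd : k % 2 = 1) (hkN : k < 2^N)
    (σ : CLim)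
    (hσ : ∀ n, (k:ℝ)/2^N ∈ realF n (σ.1 n) ∧
      ∀ f : Face n, (k:ℝ)/2^N ∈ realF n f → realF n (σ.1 n) ⊆ realF n f) :
    {τ : CLim | SpecLe τ σ}.ncard = 3 := by
  -- characterization of σ below level N
  have hσlt : ∀ n, n < N → σ.1 n = Sum.inl ⟨dA N k n, dA_lt hkN n⟩ := by
    intro n hn
    obtain ⟨h1, -⟩ := hσ n
    cases hs : σ.1 n with
    | inr v =>
      rw [hs] at h1
      simp only [realF, Set.mem_singleton_iff] at h1
      rw [keyeq] at h1
      exact absurd ⟨v.1, by rw [h1]; ring⟩ (not_dvd_pow hkodd hn)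
    | inl e =>
      rw [hs] at h1
      simp only [realF] at h1
      rw [mem_icc_iff] at h1
      have hne : k*2^n ≠ (e.1+1)*2^N := by
        intro hh
        exact not_dvd_pow hkodd hn ⟨e.1+1, by rw [hh]; ring⟩
      have hdiv : k * 2^n / 2^N = e.1 :=
        Nat.div_eq_of_lt_le h1.1 (lt_of_le_of_ne h1.2 hne)
      exact congrArg Sum.inl (Fin.ext hdiv.symm)
  -- characterization of σ at levels ≥ N
  have hσge : ∀ n, N ≤ n → σ.1 n = Sum.inr ⟨dA N k n, Nat.lt_succ_of_lt (dA_lt hkN n)⟩ := by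
    intro n hn
    obtain ⟨h1, h2⟩ := hσ n
    have hxv : (k:ℝ)/2^N ∈
        realF n (Sum.inr ⟨dA N k n, Nat.lt_succ_of_lt (dA_lt hkN n)⟩ : Face n) := by
      simp only [realF, Set.mem_singleton_iff]
      rw [keyeq]; exact (dA_dvd hn).symm
    have h3 := h2 _ hxv
    cases hs : σ.1 n with
    | inl e =>
      rw [hs] at h3; simp only [realF] at h3
      exact absurd h3 (fun hh => edge_not_sub_sing hh)
    | inr v =>
      rw [hs] at h3; simp only [realF] at h3
      rw [Set.singleton_subset_iff, Set.mem_singleton_iff, keyeq] at h3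
      have hv : v.1 = dA N k n := Nat.eq_of_mul_eq_mul_right (two_pow_pos' n) h3
      exact congrArg Sum.inr (Fin.ext hv)
  -- the two edge points
  obtain ⟨τR, hτR⟩ : ∃ τ : CLim, ∀ n, τ.1 n = Sum.inl ⟨dA N k n, dA_lt hkN n⟩ :=
    ⟨⟨fun n => Sum.inl ⟨dA N k n, dA_lt hkN n⟩,
      fun n => edge_seq_spec _ (dA_lt hkN) (dA_rec N k) n⟩, fun _ => rfl⟩
  obtain ⟨τL, hτL⟩ : ∃ τ : CLim, ∀ n, τ.1 n = Sum.inl ⟨dB N k n, dB_lt hkN n⟩ :=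
    ⟨⟨fun n => Sum.inl ⟨dB N k n, dB_lt hkN n⟩,
      fun n => edge_seq_spec _ (dB_lt hkN) (dB_rec hk0 N) n⟩, fun _ => rfl⟩
  -- memberships
  have hmemR : SpecLe τR σ := by
    intro n
    rcases lt_or_ge n N with hn | hn
    · rw [hσlt n hn, hτR n]
    · rw [hσge n hn, hτR n]
      simp only [realF, Set.singleton_subset_iff, Set.mem_Icc]
      exact ⟨le_rfl, edge_nonempty⟩
  have hmemL : SpecLe τL σ := by
    intro n
    rcases lt_or_ge n N with hn | hn
    · rw [hσlt n hn, hτL n]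
      simp only [realF]
      rw [dBlow hkodd hn]
    · rw [hσge n hn, hτL n]
      simp only [realF, Set.singleton_subset_iff, Set.mem_Icc]
      have hba : (dB N k n : ℝ) + 1 = (dA N k n : ℝ) := by
        exact_mod_cast congrArg (Nat.cast (R := ℝ)) (dB_succ hk0 hn)
      constructor
      · rw [keyle]
        exact Nat.mul_le_mul_right _ (dB_le_dA N k n)
      · rw [hba]
  -- τ below level N is forced
  have hlow : ∀ τ : CLim, SpecLe τ σ → ∀ n, n < N → τ.1 n = σ.1 n := by
    intro τ hτ n hn
    have h1 := hτ n
    rw [hσlt n hn] at h1 ⊢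
    cases hf : τ.1 n with
    | inr v =>
      rw [hf] at h1; simp only [realF] at h1
      exact absurd h1 (fun hh => edge_not_sub_sing hh)
    | inl e =>
      rw [hf] at h1; simp only [realF] at h1
      exact congrArg Sum.inl (Fin.ext (edge_sub_edge h1).symm)
  -- classification at levels ≥ N
  have hclass : ∀ τ : CLim, SpecLe τ σ → ∀ n, N ≤ n →
      τ.1 n = σ.1 n ∨ τ.1 n = Sum.inl ⟨dB N k n, dB_lt hkN n⟩ ∨
        τ.1 n = Sum.inl ⟨dA N k n, dA_lt hkN n⟩ := by
    intro τ hτ n hn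
    have h1 := hτ n
    rw [hσge n hn] at h1
    simp only [realF, Set.singleton_subset_iff] at h1
    cases hf : τ.1 n with
    | inr v =>
      rw [hf] at h1; simp only [realF, Set.mem_singleton_iff] at h1
      left
      have hv : v.1 = dA N k n :=
        (Nat.eq_of_mul_eq_mul_right (two_pow_pos' n) (keyeq.1 h1)).symm
      rw [hσge n hn]
      exact congrArg Sum.inr (Fin.ext hv)
    | inl e =>
      rw [hf] at h1; simp only [realF] at h1
      rw [mem_icc_iff] at h1
      have c1 : e.1 ≤ dA N k n := Nat.le_of_mul_le_mul_right h1.1 (two_pow_pos' n)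
      have c2 : dA N k n ≤ e.1 + 1 := Nat.le_of_mul_le_mul_right h1.2 (two_pow_pos' n)
      have hd := dB_succ hk0 hn
      rcases (show e.1 = dB N k n ∨ e.1 = dA N k n by omega) with hh | hh
      · right; left; exact congrArg Sum.inl (Fin.ext hh)
      · right; right; exact congrArg Sum.inl (Fin.ext hh)
  -- vertex propagates downward
  have P1 : ∀ τ : CLim, ∀ n, N ≤ n → τ.1 (n+1) = σ.1 (n+1) → τ.1 n = σ.1 n := by
    intro τ n hn h
    have hsub : realF (n+1) (τ.1 (n+1)) ⊆ realF n (σ.1 n) := by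
      rw [h, hσge (n+1) (Nat.le_succ_of_le hn), hσge n hn]
      simp only [realF, Set.singleton_subset_iff, Set.mem_singleton_iff]
      rw [keyeq, dA2 hn, pow_succ]
      ring
    have h3 := (τ.2 n).2 _ hsub
    rw [hσge n hn] at h3 ⊢
    cases hf : τ.1 n with
    | inl e =>
      rw [hf] at h3; simp only [realF] at h3
      exact absurd h3 (fun hh => edge_not_sub_sing hh)
    | inr v =>
      rw [hf] at h3; simp only [realF] at h3
      rw [Set.singleton_subset_iff, Set.mem_singleton_iff, keyeq] at h3
      have hv : v.1 = dA N k n := Nat.eq_of_mul_eq_mul_right (two_pow_pos' n) h3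
      exact congrArg Sum.inr (Fin.ext hv)
  -- edges propagate downward
  have P2 : ∀ (τ : CLim) (n : ℕ) (e : Fin (2^(n+1))), τ.1 (n+1) = Sum.inl e →
      ∃ e' : Fin (2^n), τ.1 n = Sum.inl e' ∧ e'.1 = e.1/2 := by
    intro τ n e he
    apply face_of_sub
    have h := (τ.2 n).1
    rw [he] at h
    simpa [realF] using h
  -- upward determination
  have hindV : ∀ τ : CLim, SpecLe τ σ → τ.1 N = σ.1 N → ∀ m, N ≤ m → τ.1 m = σ.1 m := by
    intro τ hτ hbase m hm
    induction m, hm using Nat.le_induction with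
    | base => exact hbase
    | succ m hm IH =>
      rcases hclass τ hτ (m+1) (by omega) with h | h | h
      · exact h
      · obtain ⟨e', he', -⟩ := P2 τ m _ h
        rw [IH, hσge m hm] at he'
        simp at he'
      · obtain ⟨e', he', -⟩ := P2 τ m _ h
        rw [IH, hσge m hm] at he'
        simp at he'
  have hindL : ∀ τ : CLim, SpecLe τ σ → τ.1 N = Sum.inl ⟨dB N k N, dB_lt hkN N⟩ →
      ∀ m, N ≤ m → τ.1 m = Sum.inl ⟨dB N k m, dB_lt hkN m⟩ := by
    intro τ hτ hbase m hm
    induction m, hm using Nat.le_induction with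
    | base => exact hbase
    | succ m hm IH =>
      rcases hclass τ hτ (m+1) (by omega) with h | h | h
      · have h2 := P1 τ m hm h
        rw [IH, hσge m hm] at h2
        simp at h2
      · exact h
      · obtain ⟨e', he', hv⟩ := P2 τ m _ h
        rw [IH] at he'
        have h4 : (⟨dB N k m, dB_lt hkN m⟩ : Fin (2^m)) = e' := Sum.inl_injective he'
        have h5 : dB N k m = e'.1 := congrArg Fin.val h4
        rw [hv] at h5
        simp only [dA_rec N k m] at h5
        have := dB_succ hk0 hm
        omega
  have hindR : ∀ τ : CLim, SpecLe τ σ → τ.1 N = Sum.inl ⟨dA N k N, dA_lt hkN N⟩ →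
      ∀ m, N ≤ m → τ.1 m = Sum.inl ⟨dA N k m, dA_lt hkN m⟩ := by
    intro τ hτ hbase m hm
    induction m, hm using Nat.le_induction with
    | base => exact hbase
    | succ m hm IH =>
      rcases hclass τ hτ (m+1) (by omega) with h | h | h
      · have h2 := P1 τ m hm h
        rw [IH, hσge m hm] at h2
        simp at h2
      · obtain ⟨e', he', hv⟩ := P2 τ m _ h
        rw [IH] at he'
        have h4 : (⟨dA N k m, dA_lt hkN m⟩ : Fin (2^m)) = e' := Sum.inl_injective he'
        have h5 : dA N k m = e'.1 := congrArg Fin.val h4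
        rw [hv] at h5
        simp only [dB_rec hk0 N m] at h5
        have := dB_succ hk0 hm
        omega
      · exact h
  -- the set equality
  have hset : {τ : CLim | SpecLe τ σ} = {σ, τL, τR} := by
    ext τ
    simp only [Set.mem_setOf_eq, Set.mem_insert_iff, Set.mem_singleton_iff]
    constructor
    · intro hτ
      rcases hclass τ hτ N le_rfl with h | h | h
      · left
        apply Subtype.ext; funext n
        rcases lt_or_ge n N with hn | hn
        · exact hlow τ hτ n hn
        · exact hindV τ hτ h n hn
      · right; left
        apply Subtype.ext; funext n
        rcases lt_or_ge n N with hn | hn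
        · rw [hlow τ hτ n hn, hσlt n hn, hτL n]
          exact congrArg Sum.inl (Fin.ext (dBlow hkodd hn).symm)
        · rw [hindL τ hτ h n hn, hτL n]
      · right; right
        apply Subtype.ext; funext n
        rcases lt_or_ge n N with hn | hn
        · rw [hlow τ hτ n hn, hσlt n hn, hτR n]
        · rw [hindR τ hτ h n hn, hτR n]
    · rintro (rfl | rfl | rfl)
      · exact fun n => subset_rfl
      · exact hmemL
      · exact hmemR
  have hne1 : σ ≠ τL := by
    intro h
    have h2 : σ.1 N = τL.1 N := by rw [h]
    rw [hσge N le_rfl, hτL N] at h2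
    simp at h2
  have hne2 : σ ≠ τR := by
    intro h
    have h2 : σ.1 N = τR.1 N := by rw [h]
    rw [hσge N le_rfl, hτR N] at h2
    simp at h2
  have hne3 : τL ≠ τR := by
    intro h
    have h2 : τL.1 N = τR.1 N := by rw [h]
    rw [hτL N, hτR N] at h2
    have h4 := congrArg Fin.val (Sum.inl_injective h2)
    have h5 := dB_succ hk0 (le_refl N)
    simp only at h4
    omega
  rw [hset, Set.ncard_eq_three]
  exact ⟨σ, τL, τR, hne1, hne2, hne3, rfl⟩

lemma downset_nondyadic (x : ℝ) (hx : x ∈ Set.Ioo (0:ℝ) 1)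
    (hnd : ¬ ∃ N k : ℕ, 0 < k ∧ k < 2 ^ N ∧ x = (k : ℝ) / 2 ^ N)
    (σ : CLim)
    (hσ : ∀ n, x ∈ realF n (σ.1 n) ∧
      ∀ f : Face n, x ∈ realF n f → realF n (σ.1 n) ⊆ realF n f) :
    {τ : CLim | SpecLe τ σ}.ncard = 1 := by
  have hedge : ∀ n, ∃ e : Fin (2^n), σ.1 n = Sum.inl e := by
    intro n
    obtain ⟨h1, -⟩ := hσ n
    cases hs : σ.1 n with
    | inl e => exact ⟨e, rfl⟩
    | inr v =>
      rw [hs] at h1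
      simp only [realF, Set.mem_singleton_iff] at h1
      exfalso; apply hnd
      refine ⟨n, v.1, ?_, ?_, h1⟩
      · rcases Nat.eq_zero_or_pos v.1 with h0 | h0
        · rw [h0] at h1; simp at h1
          exact absurd hx.1 (by rw [h1]; norm_num)
        · exact h0
      · have h2 : (v.1:ℝ)/2^n < 1 := h1 ▸ hx.2
        rw [div_lt_one (by positivity)] at h2
        exact_mod_cast h2
  have hone : {τ : CLim | SpecLe τ σ} = {σ} := by
    ext τ
    simp only [Set.mem_setOf_eq, Set.mem_singleton_iff]
    constructor
    · intro hτ
      apply Subtype.ext; funext n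
      obtain ⟨e, he⟩ := hedge n
      have h1 := hτ n
      rw [he] at h1 ⊢
      cases hf : τ.1 n with
      | inr v =>
        rw [hf] at h1; simp only [realF] at h1
        exact absurd h1 (fun hh => edge_not_sub_sing hh)
      | inl e' =>
        rw [hf] at h1; simp only [realF] at h1
        exact congrArg Sum.inl (Fin.ext (edge_sub_edge h1).symm)
    · rintro rfl; exact fun n => subset_rfl
  rw [hone, Set.ncard_singleton]

/-- For `x ∈ (0,1)` and `σ` the maximal point of `Ch^∞(I)` corresponding to `x` (i.e. `σₙ`
is the minimal face containing `x` at each stage): if `x` is a dyadic rational `k/2ᴺ` with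
`0 < k < 2ᴺ`, the down-set of `σ` in the specialization order has exactly 3 elements;
if `x` is not a dyadic rational, it is a singleton. -/
theorem stmt18 (x : ℝ) (hx : x ∈ Set.Ioo (0 : ℝ) 1) (σ : CLim)
    (hσ : ∀ n, x ∈ realF n (σ.1 n) ∧
      ∀ f : Face n, x ∈ realF n f → realF n (σ.1 n) ⊆ realF n f) :
    ((∃ N k : ℕ, 0 < k ∧ k < 2 ^ N ∧ x = (k : ℝ) / 2 ^ N) →
      {τ : CLim | SpecLe τ σ}.ncard = 3) ∧
    ((¬ ∃ N k : ℕ, 0 < k ∧ k < 2 ^ N ∧ x = (k : ℝ) / 2 ^ N) →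
      {τ : CLim | SpecLe τ σ}.ncard = 1) := by
  constructor
  · intro hdy
    have main : ∀ N k : ℕ, 0 < k → k < 2 ^ N → x = (k : ℝ) / 2 ^ N →
        {τ : CLim | SpecLe τ σ}.ncard = 3 := by
      intro N
      induction N using Nat.strong_induction_on with
      | _ N IH =>
        intro k hk0 hkN hxk
        have hNpos : 0 < N := by
          rcases Nat.eq_zero_or_pos N with h0 | h0
          · rw [h0] at hkN; norm_num at hkN; omega
          · exact h0
        by_cases hodd : k % 2 = 1
        · have hσ' : ∀ n, (k:ℝ)/2^N ∈ realF n (σ.1 n) ∧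
              ∀ f : Face n, (k:ℝ)/2^N ∈ realF n f → realF n (σ.1 n) ⊆ realF n f := by
            rw [← hxk]; exact hσ
          exact downset_dyadic N k hNpos hk0 hodd hkN σ hσ'
        · obtain ⟨k', hk'⟩ : ∃ k', k = 2 * k' := ⟨k/2, by omega⟩
          have hpow : 2^N = 2 * 2^(N - 1) := by
            rw [← pow_succ']; congr 1; omega
          refine IH (N-1) (by omega) k' (by omega) (by omega) ?_
          rw [hxk, hk', keyeq, hpow]
          ring
    obtain ⟨N, k, hk0, hkN, hxk⟩ := hdy
    exact main N k hk0 hkN hxk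
  · intro hnd
    exact downset_nondyadic x hx hnd σ hσ
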